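/- Fix n ≥ 2 and let G_{n+1} be the directed graph whose vertices are the n-faces of the (n+1)-cube I^{n+1}, with an edge from vertex a to vertex b for each (n−1)-face that is an outgoing subface of a and an incoming subface of b. Let L_i (1 ≤ i ≤ n+1) be the n-face with digit 0 at position i if i is odd, digit 1 if i is even (asterisks elsewhere), and let R_i be the n-face with digit 1 at position i if i is odd, digit 0 if i is even (asterisks elsewhere). Then: (1) every n-face of I^{n+1} is exactly one of L_1,…,L_{n+1},R_1,…,R_{n+1}; (2) there is an edge from L_i to L_j if and only if i < j; (3) there is an edge from R_j to R_i if and only if i < j; (4) there are no edges between any L_i and any R_j. Consequently G_{n+1} has exactly two weakly connected components, each a transitive tournament on n+1 vertices, so the reachability relation is the strict linear order L_1 < L_2 < … < L_{n+1} on the first component and R_{n+1} < … < R_2 < R_1 on the second. -/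

import Mathlib

/-- A face of the `N`-dimensional cube `I^N`, encoded as a function assigning to each
coordinate position either a digit (`some false` = 0, `some true` = 1) or an
asterisk (`none`). -/
abbrev CubeFace (N : ℕ) := Fin N → Option Bool

/-- `τ` is a `k`-face: exactly `k` positions carry an asterisk. -/
def IsFace {N : ℕ} (k : ℕ) (τ : CubeFace N) : Prop :=
  (Finset.filter (fun i => τ i = none) Finset.univ).card = k

/-- The digit `κ` associated to the asterisk position `p` of `f`: if `p` is the `k`-th
asterisk position of `f` (counting 1-based from the left), then `κ = 0` (i.e. `false`)
for odd `k` and `κ = 1` (i.e. `true`) for even `k`.  Equivalently, `κ` is `true` iff the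
number of asterisk positions strictly before `p` is odd. -/
def kappa {N : ℕ} (f : CubeFace N) (p : Fin N) : Bool :=
  decide (Odd ((Finset.filter (fun q => q < p ∧ f q = none) Finset.univ).card))

/-- `g` is obtained from `f` by replacing the asterisk at position `p` by the digit `d`. -/
def SubfaceAt {N : ℕ} (f g : CubeFace N) (p : Fin N) (d : Bool) : Prop :=
  f p = none ∧ g p = some d ∧ ∀ q, q ≠ p → g q = f q

/-- `g` is an incoming subface of `f`: it is obtained from `f` by replacing the asterisk
at some position `p` by the digit `κ(f, p)`. -/
def Incoming {N : ℕ} (f g : CubeFace N) : Prop := ∃ p, SubfaceAt f g p (kappa f p)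

/-- `g` is an outgoing subface of `f`: it is obtained from `f` by replacing the asterisk
at some position `p` by the digit different from `κ(f, p)`. -/
def Outgoing {N : ℕ} (f g : CubeFace N) : Prop := ∃ p, SubfaceAt f g p (!kappa f p)

/-- The order of a face `g`: the number of `n`-faces of the cube for which `g` is an
incoming subface. -/
noncomputable def faceOrder {N : ℕ} (n : ℕ) (g : CubeFace N) : ℕ :=
  Nat.card {f : CubeFace N // IsFace n f ∧ Incoming f g}

/-- The `n`-face `L_i` of the `(n+1)`-cube: digit 0 at position `i` if the 1-based
position is odd, digit 1 if it is even, asterisks elsewhere. -/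
def Lface (n : ℕ) (i : Fin (n + 1)) : CubeFace (n + 1) :=
  fun j => if j = i then some (decide (Odd (i : ℕ))) else none

/-- The `n`-face `R_i` of the `(n+1)`-cube: digit 1 at position `i` if the 1-based
position is odd, digit 0 if it is even, asterisks elsewhere. -/
def Rface (n : ℕ) (i : Fin (n + 1)) : CubeFace (n + 1) :=
  fun q => if q = i then some (decide (Even (i : ℕ))) else none

/-- The edge relation of the directed graph `G_{n+1}`: its vertices are the `n`-faces of
the `(n+1)`-cube, and there is an edge from `a` to `b` whenever some `(n-1)`-face is an
outgoing subface of `a` and an incoming subface of `b`. -/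
def GEdge (n : ℕ) (a b : CubeFace (n + 1)) : Prop :=
  IsFace n a ∧ IsFace n b ∧
    ∃ g : CubeFace (n + 1), IsFace (n - 1) g ∧ Outgoing a g ∧ Incoming b g


namespace Stmt5Aux

variable {n : ℕ}

/-- The `n`-face with digit `b` at position `i`, asterisks elsewhere. -/
def face (n : ℕ) (i : Fin (n+1)) (b : Bool) : CubeFace (n+1) :=
  fun q => if q = i then some b else none

lemma Lface_eq (i : Fin (n+1)) : Lface n i = face n i (decide (Odd (i : ℕ))) := rfl
lemma Rface_eq (i : Fin (n+1)) : Rface n i = face n i (decide (Even (i : ℕ))) := rfl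

lemma isFace_face (i : Fin (n+1)) (b : Bool) : IsFace n (face n i b) := by
  unfold IsFace
  have : (Finset.filter (fun q => face n i b q = none) Finset.univ) = {i}ᶜ := by
    ext q
    by_cases h : q = i <;> simp [face, h]
  rw [this, Finset.card_compl]
  simp

lemma isFace_iff (f : CubeFace (n+1)) :
    IsFace n f ↔ ∃ i b, f = face n i b := by
  constructor
  · intro h
    unfold IsFace at h
    have hc : (Finset.filter (fun i => ¬ f i = none) Finset.univ).card = 1 := by
      have h2 := Finset.card_filter_add_card_filter_not
        (s := (Finset.univ : Finset (Fin (n+1)))) (p := fun i => f i = none)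
      simp only [Finset.card_univ, Fintype.card_fin] at h2
      omega
    obtain ⟨i, hi⟩ := Finset.card_eq_one.mp hc
    have hmem : i ∈ Finset.filter (fun i => ¬ f i = none) Finset.univ := by
      rw [hi]; exact Finset.mem_singleton_self i
    have hfi : f i ≠ none := by simpa using hmem
    obtain ⟨b, hb⟩ := Option.ne_none_iff_exists'.mp hfi
    refine ⟨i, b, funext fun q => ?_⟩
    by_cases hq : q = i
    · simp [face, hq, hb]
    · have : q ∉ Finset.filter (fun i => ¬ f i = none) Finset.univ := by
        rw [hi]; simpa using hq
      simp only [Finset.mem_filter, Finset.mem_univ, true_and, not_not] at this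
      simp [face, hq, this]
  · rintro ⟨i, b, rfl⟩
    exact isFace_face i b

/-- The value of kappa for a one-digit face. -/
def kval (i p : Fin (n+1)) : Bool :=
  decide (Odd (if i < p then (p : ℕ) - 1 else (p : ℕ)))

lemma kappa_face (i : Fin (n+1)) (b : Bool) (p : Fin (n+1)) (hp : p ≠ i) :
    kappa (face n i b) p = kval i p := by
  unfold kappa kval
  congr 1
  have hset : (Finset.filter (fun q => q < p ∧ face n i b q = none) Finset.univ)
      = Finset.filter (fun q => q < p ∧ q ≠ i) Finset.univ := by
    ext q
    by_cases h : q = i <;> simp [face, h]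
  rw [hset]
  by_cases hip : i < p
  · have : Finset.filter (fun q => q < p ∧ q ≠ i) Finset.univ
        = (Finset.Iio p).erase i := by
      ext q
      simp [Finset.mem_erase, and_comm]
    rw [this, Finset.card_erase_of_mem (by simpa using hip), Fin.card_Iio]
    simp [hip]
  · have hpi : p < i := lt_of_le_of_ne (not_lt.mp hip) hp
    have : Finset.filter (fun q => q < p ∧ q ≠ i) Finset.univ = Finset.Iio p := by
      ext q
      simp only [Finset.mem_filter, Finset.mem_univ, true_and, Finset.mem_Iio,
        and_iff_left_iff_imp]
      intro hq
      exact ne_of_lt (lt_trans hq hpi)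
    rw [this, Fin.card_Iio]
    simp [hip]

/-- A face with two digits. -/
def face2 (i : Fin (n+1)) (b : Bool) (p : Fin (n+1)) (d : Bool) : CubeFace (n+1) :=
  fun q => if q = p then some d else if q = i then some b else none

lemma subfaceAt_iff (i : Fin (n+1)) (b : Bool) (g : CubeFace (n+1)) (p : Fin (n+1))
    (d : Bool) :
    SubfaceAt (face n i b) g p d ↔ p ≠ i ∧ g = face2 i b p d := by
  constructor
  · rintro ⟨h1, h2, h3⟩
    have hpi : p ≠ i := by
      intro h; rw [h] at h1; simp [face] at h1
    refine ⟨hpi, funext fun q => ?_⟩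
    by_cases hq : q = p
    · subst hq; simp [face2, h2]
    · rw [h3 q hq]
      by_cases hqi : q = i <;> simp [face, face2, hq, hqi, Ne.symm hpi]
  · rintro ⟨hpi, rfl⟩
    refine ⟨by simp [face, hpi], by simp [face2, Ne.symm hpi], fun q hq => ?_⟩
    by_cases hqi : q = i <;> simp [face, face2, hq, hqi, Ne.symm hpi]

lemma isFace_face2 (i : Fin (n+1)) (b : Bool) (p : Fin (n+1)) (d : Bool) (hpi : p ≠ i) :
    IsFace (n - 1) (face2 i b p d) := by
  unfold IsFace
  have : (Finset.filter (fun q => face2 i b p d q = none) Finset.univ)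
      = ({p, i} : Finset (Fin (n+1)))ᶜ := by
    ext q
    by_cases h1 : q = p
    · simp only [Finset.mem_filter, Finset.mem_univ, true_and]; simp [face2, h1]
    · by_cases h2 : q = i <;> simp only [Finset.mem_filter, Finset.mem_univ, true_and] <;> simp [face2, h1, h2, Ne.symm hpi]
  rw [this, Finset.card_compl, Finset.card_insert_of_notMem (by simpa using hpi)]
  simp

lemma face2_eq_iff (i : Fin (n+1)) (b : Bool) (p : Fin (n+1)) (d : Bool)
    (j p' : Fin (n+1)) (c d' : Bool) (hpi : p ≠ i) (hpj : p' ≠ j) :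
    face2 i b p d = face2 j c p' d' ↔
      (p = p' ∧ i = j ∧ d = d' ∧ b = c) ∨ (p = j ∧ i = p' ∧ d = c ∧ b = d') := by
  constructor
  · intro h
    by_cases h1 : p = p'
    · left
      subst h1
      have hd : d = d' := by
        have := congrFun h p
        simpa [face2] using this
      have hi := congrFun h i
      simp only [face2] at hi
      rw [if_neg (Ne.symm hpi), if_true, if_neg (Ne.symm hpi)] at hi
      by_cases hij : i = j
      · rw [if_pos hij] at hi
        exact ⟨rfl, hij, hd, Option.some.inj hi⟩
      · rw [if_neg hij] at hi
        exact absurd hi (Option.some_ne_none b)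
    · right
      have hp := congrFun h p
      simp only [face2] at hp
      rw [if_true, if_neg h1] at hp
      by_cases h2 : p = j
      · rw [if_pos h2] at hp
        have hp' := congrFun h p'
        simp only [face2] at hp'
        rw [if_neg (Ne.symm h1), if_true] at hp'
        by_cases h3 : p' = i
        · rw [if_pos h3] at hp'
          exact ⟨h2, h3.symm, Option.some.inj hp, Option.some.inj hp'⟩
        · rw [if_neg h3] at hp'
          exact absurd hp'.symm (Option.some_ne_none d')
      · rw [if_neg h2] at hp
        exact absurd hp (Option.some_ne_none d)
  · rintro (⟨rfl, rfl, rfl, rfl⟩ | ⟨rfl, rfl, rfl, rfl⟩)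
    · rfl
    · funext q
      by_cases hq : q = p <;> by_cases hq' : q = i <;>
        simp [face2, hq, hq', Ne.symm hpi, hpi]

lemma outgoing_iff (i : Fin (n+1)) (b : Bool) (g : CubeFace (n+1)) :
    Outgoing (face n i b) g ↔ ∃ p, p ≠ i ∧ g = face2 i b p (!kval i p) := by
  unfold Outgoing
  constructor
  · rintro ⟨p, hs⟩
    obtain ⟨hpi, rfl⟩ := (subfaceAt_iff i b _ p _).mp hs
    exact ⟨p, hpi, by rw [kappa_face i b p hpi]⟩
  · rintro ⟨p, hpi, rfl⟩
    exact ⟨p, (subfaceAt_iff i b _ p _).mpr ⟨hpi, by rw [kappa_face i b p hpi]⟩⟩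

lemma incoming_iff (i : Fin (n+1)) (b : Bool) (g : CubeFace (n+1)) :
    Incoming (face n i b) g ↔ ∃ p, p ≠ i ∧ g = face2 i b p (kval i p) := by
  unfold Incoming
  constructor
  · rintro ⟨p, hs⟩
    obtain ⟨hpi, rfl⟩ := (subfaceAt_iff i b _ p _).mp hs
    exact ⟨p, hpi, by rw [kappa_face i b p hpi]⟩
  · rintro ⟨p, hpi, rfl⟩
    exact ⟨p, (subfaceAt_iff i b _ p _).mpr ⟨hpi, by rw [kappa_face i b p hpi]⟩⟩

lemma edge_iff (i j : Fin (n+1)) (b c : Bool) :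
    GEdge n (face n i b) (face n j c) ↔ i ≠ j ∧ b = kval j i ∧ c = !kval i j := by
  constructor
  · rintro ⟨-, -, g, -, hout, hin⟩
    obtain ⟨p, hpi, rfl⟩ := (outgoing_iff i b g).mp hout
    obtain ⟨p', hpj, hg⟩ := (incoming_iff j c _).mp hin
    rcases (face2_eq_iff i b p (!kval i p) j p' c (kval j p') hpi hpj).mp hg with
      ⟨rfl, rfl, hd, rfl⟩ | ⟨rfl, rfl, hd, hb⟩
    · exact absurd hd (by simp)
    · exact ⟨Ne.symm hpi, hb, hd.symm⟩
  · rintro ⟨hij, hb, hc⟩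
    refine ⟨isFace_face i b, isFace_face j c, face2 i b j (!kval i j),
      isFace_face2 i b j _ (Ne.symm hij), ?_, ?_⟩
    · exact (outgoing_iff i b _).mpr ⟨j, Ne.symm hij, rfl⟩
    · refine (incoming_iff j c _).mpr ⟨i, hij, ?_⟩
      exact (face2_eq_iff i b j (!kval i j) j i c (kval j i) (Ne.symm hij) hij).mpr
        (Or.inr ⟨rfl, rfl, hc.symm, hb⟩)

lemma kval_of_gt {a p : Fin (n+1)} (h : p < a) : kval a p = decide (Odd (p : ℕ)) := by
  unfold kval
  rw [if_neg (not_lt.mpr h.le)]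

lemma decide_even (m : ℕ) : decide (Even m) = !decide (Odd m) := by
  rw [← decide_not]
  exact decide_eq_decide.mpr Nat.not_odd_iff_even.symm

lemma kval_of_lt {a p : Fin (n+1)} (h : a < p) : kval a p = !decide (Odd (p : ℕ)) := by
  unfold kval
  rw [if_pos h]
  obtain ⟨m, hm⟩ : ∃ m, (p : ℕ) = m + 1 := ⟨(p : ℕ) - 1, by omega⟩
  rw [hm, Nat.add_sub_cancel]
  simp only [Nat.odd_add_one]
  rw [decide_not, Bool.not_not]

lemma edge_LL (i j : Fin (n+1)) : GEdge n (Lface n i) (Lface n j) ↔ i < j := by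
  rw [Lface_eq, Lface_eq, edge_iff]
  rcases lt_trichotomy i j with h | h | h
  · exact iff_of_true
      ⟨ne_of_lt h, (kval_of_gt h).symm, by rw [kval_of_lt h, Bool.not_not]⟩ h
  · subst h
    exact iff_of_false (fun ⟨h1, _, _⟩ => h1 rfl) (lt_irrefl i)
  · refine iff_of_false (fun ⟨_, h2, _⟩ => ?_) (not_lt.mpr h.le)
    rw [kval_of_lt h] at h2
    simp at h2

lemma edge_RR (i j : Fin (n+1)) : GEdge n (Rface n j) (Rface n i) ↔ i < j := by
  rw [Rface_eq, Rface_eq, edge_iff]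
  rcases lt_trichotomy i j with h | h | h
  · exact iff_of_true
      ⟨(ne_of_lt h).symm, by rw [kval_of_lt h, decide_even],
        by rw [kval_of_gt h, decide_even]⟩ h
  · subst h
    exact iff_of_false (fun ⟨h1, _, _⟩ => h1 rfl) (lt_irrefl i)
  · refine iff_of_false (fun ⟨_, h2, _⟩ => ?_) (not_lt.mpr h.le)
    rw [kval_of_gt h, decide_even] at h2
    simp at h2

lemma not_edge_LR (i j : Fin (n+1)) : ¬ GEdge n (Lface n i) (Rface n j) := by
  rw [Lface_eq, Rface_eq, edge_iff]
  rintro ⟨h1, h2, h3⟩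
  rcases lt_or_gt_of_ne h1 with h | h
  · rw [kval_of_lt h, decide_even] at h3
    simp at h3
  · rw [kval_of_lt h] at h2
    simp at h2

lemma not_edge_RL (i j : Fin (n+1)) : ¬ GEdge n (Rface n i) (Lface n j) := by
  rw [Lface_eq, Rface_eq, edge_iff]
  rintro ⟨h1, h2, h3⟩
  rcases lt_or_gt_of_ne h1 with h | h
  · rw [kval_of_gt h, decide_even] at h2
    simp at h2
  · rw [kval_of_gt h] at h3
    simp at h3

lemma classify (f : CubeFace (n+1)) :
    IsFace n f ↔ ((∃ i, f = Lface n i) ∨ (∃ i, f = Rface n i)) := by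
  rw [isFace_iff]
  constructor
  · rintro ⟨i, b, rfl⟩
    by_cases hb : b = decide (Odd (i : ℕ))
    · exact Or.inl ⟨i, by rw [Lface_eq, hb]⟩
    · refine Or.inr ⟨i, ?_⟩
      rw [Rface_eq, decide_even]
      have : b = !decide (Odd (i : ℕ)) := by
        revert hb
        cases b <;> cases decide (Odd (i : ℕ)) <;> simp
      rw [this]
  · rintro (⟨i, rfl⟩ | ⟨i, rfl⟩)
    · exact ⟨i, _, Lface_eq i⟩
    · exact ⟨i, _, Rface_eq i⟩

lemma Lface_inj : Function.Injective (Lface n) := by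
  intro i j h
  by_contra hne
  have := congrFun h i
  simp [Lface, hne] at this

lemma Rface_inj : Function.Injective (Rface n) := by
  intro i j h
  by_contra hne
  have := congrFun h i
  simp [Rface, hne] at this

lemma Lface_ne_Rface (i j : Fin (n+1)) : Lface n i ≠ Rface n j := by
  intro h
  by_cases hij : i = j
  · subst hij
    have := congrFun h i
    simp only [Lface, Rface, if_pos rfl, Option.some.injEq] at this
    rw [decide_even] at this
    simp at this
  · have := congrFun h i
    simp [Lface, Rface, hij] at this

lemma stepL {i : Fin (n+1)} {b : CubeFace (n+1)} (h : GEdge n (Lface n i) b) :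
    ∃ j, i < j ∧ b = Lface n j := by
  have hb : IsFace n b := h.2.1
  rcases (classify b).mp hb with ⟨j, rfl⟩ | ⟨j, rfl⟩
  · exact ⟨j, (edge_LL i j).mp h, rfl⟩
  · exact absurd h (not_edge_LR i j)

lemma stepR {j : Fin (n+1)} {b : CubeFace (n+1)} (h : GEdge n (Rface n j) b) :
    ∃ i, i < j ∧ b = Rface n i := by
  have hb : IsFace n b := h.2.1
  rcases (classify b).mp hb with ⟨i, rfl⟩ | ⟨i, rfl⟩
  · exact absurd h (not_edge_RL j i)
  · exact ⟨i, (edge_RR i j).mp h, rfl⟩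

lemma transL {i : Fin (n+1)} {b : CubeFace (n+1)}
    (h : Relation.TransGen (GEdge n) (Lface n i) b) : ∃ j, i < j ∧ b = Lface n j := by
  induction h with
  | single h => exact stepL h
  | tail _ h2 ih =>
      obtain ⟨k, hik, rfl⟩ := ih
      obtain ⟨j, hkj, rfl⟩ := stepL h2
      exact ⟨j, lt_trans hik hkj, rfl⟩

lemma transR {j : Fin (n+1)} {b : CubeFace (n+1)}
    (h : Relation.TransGen (GEdge n) (Rface n j) b) : ∃ i, i < j ∧ b = Rface n i := by
  induction h with
  | single h => exact stepR h
  | tail _ h2 ih =>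
      obtain ⟨k, hik, rfl⟩ := ih
      obtain ⟨i, hkj, rfl⟩ := stepR h2
      exact ⟨i, lt_trans hkj hik, rfl⟩

end Stmt5Aux


/-- Structure of the graph `G_{n+1}`: (1) the `n`-faces of `I^{n+1}` are exactly
`L_1, …, L_{n+1}, R_1, …, R_{n+1}`, all pairwise distinct; (2) there is an edge
`L_i → L_j` iff `i < j`; (3) there is an edge `R_j → R_i` iff `i < j`; (4) there are no
edges between the `L`'s and the `R`'s.  Consequently the reachability relation is the
strict linear order `L_1 < L_2 < ⋯ < L_{n+1}` on one component, and
`R_{n+1} < ⋯ < R_2 < R_1` on the other. -/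
theorem stmt5 (n : ℕ) (hn : 2 ≤ n) :
    (∀ f : CubeFace (n + 1),
        IsFace n f ↔ ((∃ i, f = Lface n i) ∨ (∃ i, f = Rface n i))) ∧
    Function.Injective (Lface n) ∧
    Function.Injective (Rface n) ∧
    (∀ i j, Lface n i ≠ Rface n j) ∧
    (∀ i j, GEdge n (Lface n i) (Lface n j) ↔ i < j) ∧
    (∀ i j, GEdge n (Rface n j) (Rface n i) ↔ i < j) ∧
    (∀ i j, ¬ GEdge n (Lface n i) (Rface n j) ∧ ¬ GEdge n (Rface n i) (Lface n j)) ∧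
    (∀ i j, Relation.TransGen (GEdge n) (Lface n i) (Lface n j) ↔ i < j) ∧
    (∀ i j, Relation.TransGen (GEdge n) (Rface n j) (Rface n i) ↔ i < j) := by
  refine ⟨Stmt5Aux.classify, Stmt5Aux.Lface_inj, Stmt5Aux.Rface_inj,
    Stmt5Aux.Lface_ne_Rface, Stmt5Aux.edge_LL, Stmt5Aux.edge_RR,
    fun i j => ⟨Stmt5Aux.not_edge_LR i j, Stmt5Aux.not_edge_RL i j⟩, ?_, ?_⟩
  · intro i j
    constructor
    · intro h
      obtain ⟨k, hik, hk⟩ := Stmt5Aux.transL h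
      exact lt_of_lt_of_eq hik (Stmt5Aux.Lface_inj hk).symm
    · intro h
      exact Relation.TransGen.single ((Stmt5Aux.edge_LL i j).mpr h)
  · intro i j
    constructor
    · intro h
      obtain ⟨k, hik, hk⟩ := Stmt5Aux.transR h
      exact lt_of_eq_of_lt (Stmt5Aux.Rface_inj hk) hik
    · intro h
      exact Relation.TransGen.single ((Stmt5Aux.edge_RR i j).mpr h)
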